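/- (4-Bubble Lemma.) Suppose a configuration of 4 regions on ℝ with density |x| is isoperimetric and each of its regions consists of a single interval. Then no interval contains 0 in its interior, exactly two of the four intervals are contained in (−∞,0], and exactly two are contained in [0,∞). -/

import Mathlib

open MeasureTheory Finset

/-- A configuration of `n` regions made of `k` nondegenerate closed intervals
with pairwise disjoint interiors, each interval labeled by one of the regions. -/
structure Config (n k : ℕ) where
  lo : Fin k → ℝ
  hi : Fin k → ℝ
  lab : Fin k → Fin n
  nondeg : ∀ j, lo j < hi j
  disj : ∀ i j, i ≠ j → Set.Ioo (lo i) (hi i) ∩ Set.Ioo (lo j) (hi j) = ∅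

namespace Config

variable {n k : ℕ}

/-- Weighted mass of region `i` with respect to the density `|x|`. -/
noncomputable def mass (C : Config n k) (i : Fin n) : ℝ :=
  ∑ j ∈ univ.filter (fun j => C.lab j = i), ∫ x in C.lo j..C.hi j, |x|

/-- The (finite) set of all endpoints of intervals of the configuration. -/
noncomputable def endpointSet (C : Config n k) : Finset ℝ :=
  image C.lo univ ∪ image C.hi univ

/-- Total weighted perimeter with respect to the density `|x|`. -/
noncomputable def perim (C : Config n k) : ℝ :=
  ∑ x ∈ C.endpointSet, |x|

/-- A configuration is condensed if the union of its intervals is a closed interval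
containing `0` and each region has at most one interval contained in `(-∞,0]`
and at most one interval contained in `[0,∞)`. -/
def Condensed (C : Config n k) : Prop :=
  (∃ a b : ℝ, a ≤ 0 ∧ 0 ≤ b ∧ (⋃ j, Set.Icc (C.lo j) (C.hi j)) = Set.Icc a b) ∧
  ∀ i : Fin n,
    (univ.filter (fun j => C.lab j = i ∧ C.hi j ≤ 0)).card ≤ 1 ∧
    (univ.filter (fun j => C.lab j = i ∧ 0 ≤ C.lo j)).card ≤ 1

/-- A configuration is isoperimetric if its total weighted perimeter is least among all
configurations of `n` regions with the same list of weighted masses. -/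
def Isoperimetric (C : Config n k) : Prop :=
  ∀ (k' : ℕ) (C' : Config n k'), (∀ i, C'.mass i = C.mass i) → C.perim ≤ C'.perim

end Config

noncomputable def gg (x : ℝ) : ℝ := x * |x| / 2

lemma gg_hasDeriv (x : ℝ) : HasDerivAt gg |x| x := by
  rcases lt_trichotomy x 0 with h | h | h
  · have h1 : HasDerivAt (fun y : ℝ => -(y*y)/2) |x| x := by
      have := ((hasDerivAt_id x).mul (hasDerivAt_id x)).neg.div_const 2
      rw [abs_of_neg h]
      simpa using this
    refine h1.congr_of_eventuallyEq ?_
    filter_upwards [eventually_lt_nhds h] with y hy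
    simp only [gg, abs_of_neg hy]
    ring
  · subst h
    rw [hasDerivAt_iff_tendsto_slope]
    have hs : ∀ y : ℝ, y ≠ 0 → |y|/2 = slope gg 0 y := by
      intro y hy
      simp only [slope, gg, vsub_eq_sub, sub_zero, smul_eq_mul]
      field_simp
      simp
    rw [show |(0:ℝ)| = 0 by simp]
    apply Filter.Tendsto.congr' (f₁ := fun y => |y|/2)
    · filter_upwards [self_mem_nhdsWithin] with y hy using hs y hy
    · have : Filter.Tendsto (fun y : ℝ => |y|/2) (nhds 0) (nhds 0) := by
        have := (continuous_abs.tendsto (0:ℝ)).div_const 2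
        simpa using this
      exact this.mono_left nhdsWithin_le_nhds
  · have h1 : HasDerivAt (fun y : ℝ => (y*y)/2) |x| x := by
      have := ((hasDerivAt_id x).mul (hasDerivAt_id x)).div_const 2
      rw [abs_of_pos h]
      simpa using this
    refine h1.congr_of_eventuallyEq ?_
    filter_upwards [eventually_gt_nhds h] with y hy
    simp [gg, abs_of_pos hy]

lemma integral_abs (a b : ℝ) : ∫ x in a..b, |x| = gg b - gg a := by
  apply intervalIntegral.integral_eq_sub_of_hasDerivAt
  · intro x _; exact gg_hasDeriv x
  · exact (continuous_abs.intervalIntegrable a b)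

lemma gg_mono : StrictMono gg := by
  intro x y hxy
  simp only [gg]
  rcases abs_cases x with ⟨hx, hx'⟩ | ⟨hx, hx'⟩ <;>
    rcases abs_cases y with ⟨hy, hy'⟩ | ⟨hy, hy'⟩ <;> rw [hx, hy] <;> nlinarith

lemma gg_neg (x : ℝ) : gg (-x) = - gg x := by simp [gg]; ring

lemma gg_sqrt {A : ℝ} (hA : 0 ≤ A) : gg (Real.sqrt (2*A)) = A := by
  have h1 : (0:ℝ) ≤ Real.sqrt (2*A) := Real.sqrt_nonneg _
  have h2 : Real.sqrt (2*A) * Real.sqrt (2*A) = 2*A := Real.mul_self_sqrt (by linarith)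
  show Real.sqrt (2*A) * |Real.sqrt (2*A)| / 2 = A
  rw [abs_of_nonneg h1, h2]; ring

lemma sqrt_le_abs_of_le_gg {X y : ℝ} (h : X ≤ gg y) : Real.sqrt (2*X) ≤ |y| := by
  rcases le_or_gt X 0 with hX | hX
  · rw [Real.sqrt_eq_zero_of_nonpos (by linarith)]; positivity
  · have hy : 0 < y := by
      by_contra hy
      push_neg at hy
      have : gg y ≤ 0 := by
        simp only [gg]; nlinarith [abs_nonneg y, abs_of_nonpos hy]
      linarith
    have : 2*X ≤ y^2 := by
      have : gg y = y^2/2 := by simp [gg, abs_of_pos hy]; ring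
      nlinarith
    calc Real.sqrt (2*X) ≤ Real.sqrt (y^2) := Real.sqrt_le_sqrt this
    _ = |y| := Real.sqrt_sq_eq_abs y


-- increments of sqrt decrease
lemma sqrt_inc {A B d : ℝ} (hB : 0 ≤ B) (hBA : B ≤ A) (hd : 0 ≤ d) :
    Real.sqrt (A+d) + Real.sqrt B ≤ Real.sqrt (B+d) + Real.sqrt A := by
  have hA : 0 ≤ A := le_trans hB hBA
  set p := Real.sqrt A with hp
  set q := Real.sqrt B with hq
  set u := Real.sqrt (A+d) with hu
  set v := Real.sqrt (B+d) with hv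
  have hp2 : p^2 = A := Real.sq_sqrt hA
  have hq2 : q^2 = B := Real.sq_sqrt hB
  have hu2 : u^2 = A+d := Real.sq_sqrt (by linarith)
  have hv2 : v^2 = B+d := Real.sq_sqrt (by linarith)
  have hqp : q ≤ p := Real.sqrt_le_sqrt hBA
  have hvu : v ≤ u := Real.sqrt_le_sqrt (by linarith)
  have hpu : p ≤ u := Real.sqrt_le_sqrt (by linarith)
  have hqv : q ≤ v := Real.sqrt_le_sqrt (by linarith)
  have hq0 : 0 ≤ q := Real.sqrt_nonneg _
  have hv0 : 0 ≤ v := Real.sqrt_nonneg _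
  nlinarith [mul_nonneg (sub_nonneg.2 hqp) (sub_nonneg.2 hvu), sq_nonneg (u-v), sq_nonneg (p-q)]

-- strict concavity combination
lemma conc_strict {A l r : ℝ} (hA : 0 ≤ A) (hl : 0 < l) (hr : 0 < r) :
    r * Real.sqrt (2*A) + l * Real.sqrt (2*(l+r+A)) < (l+r) * Real.sqrt (2*(l+A)) := by
  set x := Real.sqrt (2*A) with hx
  set y := Real.sqrt (2*(l+r+A)) with hy
  set z := Real.sqrt (2*(l+A)) with hz
  have hx2 : x^2 = 2*A := Real.sq_sqrt (by linarith)
  have hy2 : y^2 = 2*(l+r+A) := Real.sq_sqrt (by linarith)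
  have hz2 : z^2 = 2*(l+A) := Real.sq_sqrt (by linarith)
  have hx0 : 0 ≤ x := Real.sqrt_nonneg _
  have hz0 : 0 < z := Real.sqrt_pos.2 (by linarith)
  have hxy : x < y := by
    apply Real.sqrt_lt_sqrt (by linarith); linarith
  have hd2 : 0 < (y-x)^2 := pow_pos (sub_pos.2 hxy) 2
  have e1 : r*x^2 + l*y^2 = (l+r)*z^2 := by rw [hx2, hy2, hz2]; ring
  have key : (r*x+l*y)^2 + l*r*(y-x)^2 = (l+r)*((l+r)*z^2) := by
    rw [← e1]; ring
  have key2 : (r*x + l*y)^2 < ((l+r)*z)^2 := by nlinarith [mul_pos (mul_pos hl hr) hd2]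
  have hbz : 0 ≤ (l+r)*z := by positivity
  exact lt_of_pow_lt_pow_left₀ 2 hbz key2

lemma Ioo_disj {a b c d : ℝ} (h : b ≤ c) : Set.Ioo a b ∩ Set.Ioo c d = ∅ := by
  ext x
  simp only [Set.mem_inter_iff, Set.mem_Ioo, Set.mem_empty_iff_false, iff_false]
  rintro ⟨⟨_, h1⟩, h2, _⟩
  linarith

lemma sep {a b c d : ℝ} (hdisj : Set.Ioo a b ∩ Set.Ioo c d = ∅) (hab : a < b) (hcd : c < d)
    (hac : a ≤ c) : b ≤ c := by
  by_contra hbc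
  push_neg at hbc
  have hc : c < min b d := lt_min hbc hcd
  have hb1 : min b d ≤ b := min_le_left b d
  have hb2 : min b d ≤ d := min_le_right b d
  have hx : (c + min b d)/2 ∈ Set.Ioo a b ∩ Set.Ioo c d :=
    ⟨⟨by linarith, by linarith⟩, by linarith, by linarith⟩
  rw [hdisj] at hx
  exact hx


lemma lo_mem_endpointSet (C : Config n k) (j : Fin k) : C.lo j ∈ C.endpointSet :=
  Finset.mem_union_left _ (Finset.mem_image_of_mem _ (Finset.mem_univ j))
lemma hi_mem_endpointSet (C : Config n k) (j : Fin k) : C.hi j ∈ C.endpointSet :=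
  Finset.mem_union_right _ (Finset.mem_image_of_mem _ (Finset.mem_univ j))

lemma sum_abs5 (x0 x1 x2 x3 x4 : ℝ) (h01 : x0 < x1) (h12 : x1 < x2) (h23 : x2 < x3)
    (h34 : x3 < x4) :
    ∑ x ∈ ({x0, x1, x2, x3, x4} : Finset ℝ), |x| = |x0| + |x1| + |x2| + |x3| + |x4| := by
  rw [Finset.sum_insert (by simp; push_neg; exact ⟨by linarith, by linarith, by linarith, by linarith⟩)]
  rw [Finset.sum_insert (by simp; push_neg; exact ⟨by linarith, by linarith, by linarith⟩)]
  rw [Finset.sum_insert (by simp; push_neg; exact ⟨by linarith, by linarith⟩)]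
  rw [Finset.sum_insert (by simp; push_neg; exact (by linarith : x3 ≠ x4))]
  rw [Finset.sum_singleton]
  ring

lemma perim_ge5 (C : Config n k) (z0 z1 z2 z3 z4 : ℝ)
    (m0 : z0 ∈ C.endpointSet) (m1 : z1 ∈ C.endpointSet) (m2 : z2 ∈ C.endpointSet)
    (m3 : z3 ∈ C.endpointSet) (m4 : z4 ∈ C.endpointSet)
    (h01 : z0 < z1) (h12 : z1 < z2) (h23 : z2 < z3) (h34 : z3 < z4) :
    |z0| + |z1| + |z2| + |z3| + |z4| ≤ C.perim := by
  rw [← sum_abs5 z0 z1 z2 z3 z4 h01 h12 h23 h34]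
  apply Finset.sum_le_sum_of_subset_of_nonneg
  · intro z hz
    simp only [Finset.mem_insert, Finset.mem_singleton] at hz
    rcases hz with rfl|rfl|rfl|rfl|rfl <;> assumption
  · intro _ _ _; positivity

lemma sum_abs4 (x0 x1 x2 x3 : ℝ) (h01 : x0 < x1) (h12 : x1 < x2) (h23 : x2 < x3) :
    ∑ x ∈ ({x0, x1, x2, x3} : Finset ℝ), |x| = |x0| + |x1| + |x2| + |x3| := by
  rw [Finset.sum_insert (by simp; push_neg; exact ⟨by linarith, by linarith, by linarith⟩)]
  rw [Finset.sum_insert (by simp; push_neg; exact ⟨by linarith, by linarith⟩)]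
  rw [Finset.sum_insert (by simp; push_neg; exact (by linarith : x2 ≠ x3))]
  rw [Finset.sum_singleton]
  ring

lemma perim_ge4 (C : Config n k) (z0 z1 z2 z3 : ℝ)
    (m0 : z0 ∈ C.endpointSet) (m1 : z1 ∈ C.endpointSet) (m2 : z2 ∈ C.endpointSet)
    (m3 : z3 ∈ C.endpointSet)
    (h01 : z0 < z1) (h12 : z1 < z2) (h23 : z2 < z3) :
    |z0| + |z1| + |z2| + |z3| ≤ C.perim := by
  rw [← sum_abs4 z0 z1 z2 z3 h01 h12 h23]
  apply Finset.sum_le_sum_of_subset_of_nonneg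
  · intro z hz
    simp only [Finset.mem_insert, Finset.mem_singleton] at hz
    rcases hz with rfl|rfl|rfl|rfl <;> assumption
  · intro _ _ _; positivity

lemma kernel {C : Config 4 4} (hiso : C.Isoperimetric)
    (x0 x1 x2 x3 x4 : ℝ)
    (h01 : x0 < x1) (h12 : x1 < x2) (h23 : x2 < x3) (h34 : x3 < x4)
    (lb : Fin 4 → Fin 4) (hinj : Function.Injective lb) (hsurj : Function.Surjective lb)
    (hm0 : C.mass (lb 0) = gg x1 - gg x0)
    (hm1 : C.mass (lb 1) = gg x2 - gg x1)
    (hm2 : C.mass (lb 2) = gg x3 - gg x2)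
    (hm3 : C.mass (lb 3) = gg x4 - gg x3) :
    C.perim ≤ |x0| + |x1| + |x2| + |x3| + |x4| := by
  set lov : Fin 4 → ℝ := ![x0, x1, x2, x3] with hlov
  set hiv : Fin 4 → ℝ := ![x1, x2, x3, x4] with hhiv
  have hvals : lov 0 = x0 ∧ lov 1 = x1 ∧ lov 2 = x2 ∧ lov 3 = x3 ∧
      hiv 0 = x1 ∧ hiv 1 = x2 ∧ hiv 2 = x3 ∧ hiv 3 = x4 := by
    refine ⟨rfl, rfl, rfl, rfl, rfl, rfl, rfl, rfl⟩
  have hnd : ∀ j : Fin 4, lov j < hiv j := by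
    intro j; fin_cases j <;> simp [hlov, hhiv] <;> assumption
  have hdisj : ∀ i j : Fin 4, i ≠ j →
      Set.Ioo (lov i) (hiv i) ∩ Set.Ioo (lov j) (hiv j) = ∅ := by
    intro i j hij
    fin_cases i <;> fin_cases j <;>
      first
        | exact absurd rfl hij
        | (apply Ioo_disj; simp [hlov, hhiv]; done)
        | (apply Ioo_disj; simp [hlov, hhiv]; linarith; done)
        | (rw [Set.inter_comm]; apply Ioo_disj; simp [hlov, hhiv]; done)
        | (rw [Set.inter_comm]; apply Ioo_disj; simp [hlov, hhiv]; linarith)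
  set C' : Config 4 4 := ⟨lov, hiv, lb, hnd, hdisj⟩ with hC'
  have hmass' : ∀ t : Fin 4, C'.mass (lb t) = gg (hiv t) - gg (lov t) := by
    intro t
    have hfilter : univ.filter (fun j => C'.lab j = lb t) = {t} := by
      ext j
      simp only [Finset.mem_filter, Finset.mem_univ, true_and, Finset.mem_singleton]
      exact ⟨fun h => hinj h, fun h => by rw [h]⟩
    rw [Config.mass, hfilter, Finset.sum_singleton, integral_abs]
  have hmasses : ∀ i, C'.mass i = C.mass i := by
    intro i
    obtain ⟨t, rfl⟩ := hsurj i
    have := hmass' t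
    fin_cases t <;> rw [hmass' _] <;> simp [hlov, hhiv] <;>
      [rw [hm0]; rw [hm1]; rw [hm2]; rw [hm3]]
  have hper : C'.perim = |x0| + |x1| + |x2| + |x3| + |x4| := by
    have hE : C'.endpointSet = {x0, x1, x2, x3, x4} := by
      ext z
      simp only [Config.endpointSet, Finset.mem_union, Finset.mem_image, Finset.mem_univ,
        true_and, Finset.mem_insert, Finset.mem_singleton]
      constructor
      · rintro (⟨j, rfl⟩ | ⟨j, rfl⟩) <;> fin_cases j <;> simp [hC', hlov, hhiv]
      · rintro (rfl|rfl|rfl|rfl|rfl)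
        · exact Or.inl ⟨0, rfl⟩
        · exact Or.inl ⟨1, rfl⟩
        · exact Or.inl ⟨2, rfl⟩
        · exact Or.inl ⟨3, rfl⟩
        · exact Or.inr ⟨3, rfl⟩
    rw [Config.perim, hE, sum_abs5 x0 x1 x2 x3 x4 h01 h12 h23 h34]
  calc C.perim ≤ C'.perim := hiso 4 C' hmasses
  _ = _ := hper


lemma vec4_inj {α : Type*} (a b c d : α) (hab : a≠b) (hac : a≠c) (had : a≠d) (hbc : b≠c)
    (hbd : b≠d) (hcd : c≠d) : Function.Injective ![a,b,c,d] := by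
  intro x y h
  fin_cases x <;> fin_cases y <;> first | rfl | (exfalso; simp_all)

lemma gg_zero : gg 0 = 0 := by simp [gg]

lemma case_c0 (C : Config 4 4) (hiso : C.Isoperimetric) (j0 j1 j2 j3 : Fin 4)
    (hinj : Function.Injective C.lab)
    (hmf : ∀ j : Fin 4, C.mass (C.lab j) = gg (C.hi j) - gg (C.lo j))
    (h01 : C.hi j0 ≤ C.lo j1) (h12 : C.hi j1 ≤ C.lo j2) (h23 : C.hi j2 ≤ C.lo j3)
    (hn0 : C.lo j0 < C.hi j0) (hn1 : C.lo j1 < C.hi j1) (hn2 : C.lo j2 < C.hi j2)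
    (hn3 : C.lo j3 < C.hi j3)
    (h0 : 0 ≤ C.lo j0) : False := by
  set a0 := C.lo j0; set b0 := C.hi j0
  set a1 := C.lo j1; set b1 := C.hi j1
  set a2 := C.lo j2; set b2 := C.hi j2
  set a3 := C.lo j3; set b3 := C.hi j3
  set μ0 : ℝ := gg b0 - gg a0 with hμ0
  set μ1 : ℝ := gg b1 - gg a1 with hμ1
  set μ2 : ℝ := gg b2 - gg a2 with hμ2
  set μ3 : ℝ := gg b3 - gg a3 with hμ3
  have hp0 : 0 < μ0 := sub_pos.2 (gg_mono hn0)
  have hp1 : 0 < μ1 := sub_pos.2 (gg_mono hn1)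
  have hp2 : 0 < μ2 := sub_pos.2 (gg_mono hn2)
  have hp3 : 0 < μ3 := sub_pos.2 (gg_mono hn3)
  have hga0 : 0 ≤ gg a0 := by simpa [gg_zero] using gg_mono.monotone h0
  have hc01 : gg b0 ≤ gg a1 := gg_mono.monotone h01
  have hc12 : gg b1 ≤ gg a2 := gg_mono.monotone h12
  have hc23 : gg b2 ≤ gg a3 := gg_mono.monotone h23
  -- lower bound on endpoints
  have s0 : Real.sqrt (2*μ0) ≤ b0 := by
    have := sqrt_le_abs_of_le_gg (X := μ0) (y := b0) (by simp only [hμ0]; linarith)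
    rwa [abs_of_pos (by linarith)] at this
  have s1 : Real.sqrt (2*(μ0+μ1)) ≤ b1 := by
    have := sqrt_le_abs_of_le_gg (X := μ0+μ1) (y := b1) (by simp only [hμ0, hμ1]; linarith)
    rwa [abs_of_pos (by linarith)] at this
  have s2 : Real.sqrt (2*(μ0+μ1+μ2)) ≤ b2 := by
    have := sqrt_le_abs_of_le_gg (X := μ0+μ1+μ2) (y := b2) (by simp only [hμ0, hμ1, hμ2]; linarith)
    rwa [abs_of_pos (by linarith)] at this
  have s3 : Real.sqrt (2*(μ0+μ1+μ2+μ3)) ≤ b3 := by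
    have := sqrt_le_abs_of_le_gg (X := μ0+μ1+μ2+μ3) (y := b3)
      (by simp only [hμ0, hμ1, hμ2, hμ3]; linarith)
    rwa [abs_of_pos (by linarith)] at this
  have hlow : b0 + b1 + b2 + b3 ≤ C.perim := by
    have h := perim_ge4 C b0 b1 b2 b3 (hi_mem_endpointSet C j0) (hi_mem_endpointSet C j1)
      (hi_mem_endpointSet C j2) (hi_mem_endpointSet C j3)
      (by linarith) (by linarith) (by linarith)
    rw [abs_of_pos (by linarith), abs_of_pos (by linarith), abs_of_pos (by linarith),
      abs_of_pos (by linarith)] at h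
    exact h
  -- competitor
  have hne01 : j0 ≠ j1 := fun h => by have e : b0 = b1 := congrArg C.hi h; linarith
  have hne12 : j1 ≠ j2 := fun h => by have e : b1 = b2 := congrArg C.hi h; linarith
  have hne23 : j2 ≠ j3 := fun h => by have e : b2 = b3 := congrArg C.hi h; linarith
  have hne02 : j0 ≠ j2 := fun h => by have e : b0 = b2 := congrArg C.hi h; linarith
  have hne03 : j0 ≠ j3 := fun h => by have e : b0 = b3 := congrArg C.hi h; linarith
  have hne13 : j1 ≠ j3 := fun h => by have e : b1 = b3 := congrArg C.hi h; linarith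
  have hvinj : Function.Injective ![j3, j0, j1, j2] :=
    vec4_inj _ _ _ _ (Ne.symm hne03) (Ne.symm hne13) (Ne.symm hne23) hne01 hne02 hne12
  have hlbinj : Function.Injective (C.lab ∘ ![j3, j0, j1, j2]) := hinj.comp hvinj
  have hlbsurj : Function.Surjective (C.lab ∘ ![j3, j0, j1, j2]) :=
    Finite.surjective_of_injective hlbinj
  have hq3 : (0:ℝ) < Real.sqrt (2*μ3) := Real.sqrt_pos.2 (by linarith)
  have hq0 : (0:ℝ) < Real.sqrt (2*μ0) := Real.sqrt_pos.2 (by linarith)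
  have hq01 : Real.sqrt (2*μ0) < Real.sqrt (2*(μ0+μ1)) := Real.sqrt_lt_sqrt (by linarith) (by linarith)
  have hq012 : Real.sqrt (2*(μ0+μ1)) < Real.sqrt (2*(μ0+μ1+μ2)) :=
    Real.sqrt_lt_sqrt (by positivity) (by linarith)
  have hup := kernel hiso (-Real.sqrt (2*μ3)) 0 (Real.sqrt (2*μ0)) (Real.sqrt (2*(μ0+μ1)))
    (Real.sqrt (2*(μ0+μ1+μ2))) (by linarith) hq0 hq01 hq012
    (C.lab ∘ ![j3, j0, j1, j2]) hlbinj hlbsurj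
    (by show C.mass (C.lab j3) = _
        rw [hmf j3, gg_zero, gg_neg, gg_sqrt (by linarith : (0:ℝ) ≤ μ3)]
        simp only [hμ3]; ring)
    (by show C.mass (C.lab j0) = _
        rw [hmf j0, gg_zero, gg_sqrt (by linarith : (0:ℝ) ≤ μ0)]
        simp only [hμ0]; ring)
    (by show C.mass (C.lab j1) = _
        rw [hmf j1, gg_sqrt (by linarith : (0:ℝ) ≤ μ0),
          gg_sqrt (by linarith : (0:ℝ) ≤ μ0+μ1)]
        simp only [hμ1]; ring)
    (by show C.mass (C.lab j2) = _
        rw [hmf j2, gg_sqrt (by linarith : (0:ℝ) ≤ μ0+μ1),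
          gg_sqrt (by linarith : (0:ℝ) ≤ μ0+μ1+μ2)]
        simp only [hμ2]; ring)
  rw [abs_neg, abs_of_nonneg (Real.sqrt_nonneg _), abs_zero,
    abs_of_nonneg (Real.sqrt_nonneg _), abs_of_nonneg (Real.sqrt_nonneg _),
    abs_of_nonneg (Real.sqrt_nonneg _)] at hup
  -- strictness
  have hstrict : Real.sqrt (2*μ3) < Real.sqrt (2*(μ0+μ1+μ2+μ3)) :=
    Real.sqrt_lt_sqrt (by positivity) (by linarith)
  linarith

lemma case_c1 (C : Config 4 4) (hiso : C.Isoperimetric) (j0 j1 j2 j3 : Fin 4)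
    (hinj : Function.Injective C.lab)
    (hmf : ∀ j : Fin 4, C.mass (C.lab j) = gg (C.hi j) - gg (C.lo j))
    (h01 : C.hi j0 ≤ C.lo j1) (h12 : C.hi j1 ≤ C.lo j2) (h23 : C.hi j2 ≤ C.lo j3)
    (hn0 : C.lo j0 < C.hi j0) (hn1 : C.lo j1 < C.hi j1) (hn2 : C.lo j2 < C.hi j2)
    (hn3 : C.lo j3 < C.hi j3)
    (h0 : C.hi j0 ≤ 0) (h1 : 0 ≤ C.lo j1) : False := by
  set a0 := C.lo j0; set b0 := C.hi j0
  set a1 := C.lo j1; set b1 := C.hi j1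
  set a2 := C.lo j2; set b2 := C.hi j2
  set a3 := C.lo j3; set b3 := C.hi j3
  set μ0 : ℝ := gg b0 - gg a0 with hμ0
  set μ1 : ℝ := gg b1 - gg a1 with hμ1
  set μ2 : ℝ := gg b2 - gg a2 with hμ2
  set μ3 : ℝ := gg b3 - gg a3 with hμ3
  have hp0 : 0 < μ0 := sub_pos.2 (gg_mono hn0)
  have hp1 : 0 < μ1 := sub_pos.2 (gg_mono hn1)
  have hp2 : 0 < μ2 := sub_pos.2 (gg_mono hn2)
  have hp3 : 0 < μ3 := sub_pos.2 (gg_mono hn3)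
  have hgb0 : gg b0 ≤ 0 := by simpa [gg_zero] using gg_mono.monotone h0
  have hga1 : 0 ≤ gg a1 := by simpa [gg_zero] using gg_mono.monotone h1
  have hc12 : gg b1 ≤ gg a2 := gg_mono.monotone h12
  have hc23 : gg b2 ≤ gg a3 := gg_mono.monotone h23
  -- lower bounds
  have s0 : Real.sqrt (2*μ0) ≤ -a0 := by
    have := sqrt_le_abs_of_le_gg (X := μ0) (y := -a0)
      (by rw [gg_neg]; simp only [hμ0]; linarith)
    rwa [abs_of_pos (by linarith)] at this
  have s1 : Real.sqrt (2*μ1) ≤ b1 := by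
    have := sqrt_le_abs_of_le_gg (X := μ1) (y := b1) (by simp only [hμ1]; linarith)
    rwa [abs_of_pos (by linarith)] at this
  have s2 : Real.sqrt (2*(μ1+μ2)) ≤ b2 := by
    have := sqrt_le_abs_of_le_gg (X := μ1+μ2) (y := b2) (by simp only [hμ1, hμ2]; linarith)
    rwa [abs_of_pos (by linarith)] at this
  have s3 : Real.sqrt (2*(μ1+μ2+μ3)) ≤ b3 := by
    have := sqrt_le_abs_of_le_gg (X := μ1+μ2+μ3) (y := b3)
      (by simp only [hμ1, hμ2, hμ3]; linarith)
    rwa [abs_of_pos (by linarith)] at this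
  have hlow : -a0 + b1 + b2 + b3 ≤ C.perim := by
    have h := perim_ge4 C a0 b1 b2 b3 (lo_mem_endpointSet C j0) (hi_mem_endpointSet C j1)
      (hi_mem_endpointSet C j2) (hi_mem_endpointSet C j3)
      (by linarith) (by linarith) (by linarith)
    rw [abs_of_neg (by linarith : a0 < 0), abs_of_pos (by linarith), abs_of_pos (by linarith),
      abs_of_pos (by linarith)] at h
    exact h
  have hne01 : j0 ≠ j1 := fun h => by have e : b0 = b1 := congrArg C.hi h; linarith
  have hne12 : j1 ≠ j2 := fun h => by have e : b1 = b2 := congrArg C.hi h; linarith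
  have hne23 : j2 ≠ j3 := fun h => by have e : b2 = b3 := congrArg C.hi h; linarith
  have hne02 : j0 ≠ j2 := fun h => by have e : b0 = b2 := congrArg C.hi h; linarith
  have hne03 : j0 ≠ j3 := fun h => by have e : b0 = b3 := congrArg C.hi h; linarith
  have hne13 : j1 ≠ j3 := fun h => by have e : b1 = b3 := congrArg C.hi h; linarith
  rcases lt_or_ge μ0 (μ1+μ2) with hcase | hcase
  · -- move μ3 to the left, outside μ0
    have hvinj : Function.Injective ![j3, j0, j1, j2] :=
      vec4_inj _ _ _ _ (Ne.symm hne03) (Ne.symm hne13) (Ne.symm hne23) hne01 hne02 hne12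
    have hlbinj : Function.Injective (C.lab ∘ ![j3, j0, j1, j2]) := hinj.comp hvinj
    have hlbsurj := Finite.surjective_of_injective hlbinj
    have hup := kernel hiso (-Real.sqrt (2*(μ0+μ3))) (-Real.sqrt (2*μ0)) 0
      (Real.sqrt (2*μ1)) (Real.sqrt (2*(μ1+μ2)))
      (neg_lt_neg (Real.sqrt_lt_sqrt (by positivity) (by linarith)))
      (neg_lt_zero.2 (Real.sqrt_pos.2 (by linarith)))
      (Real.sqrt_pos.2 (by linarith))
      (Real.sqrt_lt_sqrt (by positivity) (by linarith))
      (C.lab ∘ ![j3, j0, j1, j2]) hlbinj hlbsurj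
      (by show C.mass (C.lab j3) = _
          rw [hmf j3, gg_neg, gg_neg, gg_sqrt (by linarith : (0:ℝ) ≤ μ0),
            gg_sqrt (by linarith : (0:ℝ) ≤ μ0+μ3)]
          simp only [hμ3]; ring)
      (by show C.mass (C.lab j0) = _
          rw [hmf j0, gg_zero, gg_neg, gg_sqrt (by linarith : (0:ℝ) ≤ μ0)]
          simp only [hμ0]; ring)
      (by show C.mass (C.lab j1) = _
          rw [hmf j1, gg_zero, gg_sqrt (by linarith : (0:ℝ) ≤ μ1)]
          simp only [hμ1]; ring)
      (by show C.mass (C.lab j2) = _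
          rw [hmf j2, gg_sqrt (by linarith : (0:ℝ) ≤ μ1),
            gg_sqrt (by linarith : (0:ℝ) ≤ μ1+μ2)]
          simp only [hμ2]; ring)
    rw [abs_neg, abs_of_nonneg (Real.sqrt_nonneg _), abs_neg,
      abs_of_nonneg (Real.sqrt_nonneg _), abs_zero,
      abs_of_nonneg (Real.sqrt_nonneg _), abs_of_nonneg (Real.sqrt_nonneg _)] at hup
    have hstrict : Real.sqrt (2*(μ0+μ3)) < Real.sqrt (2*(μ1+μ2+μ3)) :=
      Real.sqrt_lt_sqrt (by positivity) (by linarith)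
    linarith
  · -- move μ1 to the left, inside μ0
    have hvinj : Function.Injective ![j0, j1, j2, j3] :=
      vec4_inj _ _ _ _ hne01 hne02 hne03 hne12 hne13 hne23
    have hlbinj : Function.Injective (C.lab ∘ ![j0, j1, j2, j3]) := hinj.comp hvinj
    have hlbsurj := Finite.surjective_of_injective hlbinj
    have hup := kernel hiso (-Real.sqrt (2*(μ1+μ0))) (-Real.sqrt (2*μ1)) 0
      (Real.sqrt (2*μ2)) (Real.sqrt (2*(μ2+μ3)))
      (neg_lt_neg (Real.sqrt_lt_sqrt (by positivity) (by linarith)))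
      (neg_lt_zero.2 (Real.sqrt_pos.2 (by linarith)))
      (Real.sqrt_pos.2 (by linarith))
      (Real.sqrt_lt_sqrt (by positivity) (by linarith))
      (C.lab ∘ ![j0, j1, j2, j3]) hlbinj hlbsurj
      (by show C.mass (C.lab j0) = _
          rw [hmf j0, gg_neg, gg_neg, gg_sqrt (by linarith : (0:ℝ) ≤ μ1),
            gg_sqrt (by linarith : (0:ℝ) ≤ μ1+μ0)]
          simp only [hμ0]; ring)
      (by show C.mass (C.lab j1) = _
          rw [hmf j1, gg_zero, gg_neg, gg_sqrt (by linarith : (0:ℝ) ≤ μ1)]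
          simp only [hμ1]; ring)
      (by show C.mass (C.lab j2) = _
          rw [hmf j2, gg_zero, gg_sqrt (by linarith : (0:ℝ) ≤ μ2)]
          simp only [hμ2]; ring)
      (by show C.mass (C.lab j3) = _
          rw [hmf j3, gg_sqrt (by linarith : (0:ℝ) ≤ μ2),
            gg_sqrt (by linarith : (0:ℝ) ≤ μ2+μ3)]
          simp only [hμ3]; ring)
    rw [abs_neg, abs_of_nonneg (Real.sqrt_nonneg _), abs_neg,
      abs_of_nonneg (Real.sqrt_nonneg _), abs_zero,
      abs_of_nonneg (Real.sqrt_nonneg _), abs_of_nonneg (Real.sqrt_nonneg _)] at hup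
    have i1 := sqrt_inc (by positivity : (0:ℝ) ≤ 2*μ2)
      (by linarith : (2:ℝ)*μ2 ≤ 2*μ0) (by positivity : (0:ℝ) ≤ 2*μ1)
    rw [show (2*μ0+2*μ1 : ℝ) = 2*(μ1+μ0) by ring,
      show (2*μ2+2*μ1 : ℝ) = 2*(μ1+μ2) by ring] at i1
    have hstrict : Real.sqrt (2*(μ2+μ3)) < Real.sqrt (2*(μ1+μ2+μ3)) :=
      Real.sqrt_lt_sqrt (by positivity) (by linarith)
    linarith

lemma conc_strict0 {l r : ℝ} (hl : 0 < l) (hr : 0 < r) :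
    l * Real.sqrt (2*(l+r)) < (l+r) * Real.sqrt (2*l) := by
  have h := conc_strict (le_refl (0:ℝ)) hl hr
  rw [show (2*(0:ℝ)) = 0 by ring, Real.sqrt_zero, mul_zero, zero_add,
    show (l+r+0 : ℝ) = l+r by ring, show (l+0 : ℝ) = l by ring] at h
  exact h

lemma case_str0 (C : Config 4 4) (hiso : C.Isoperimetric) (j0 j1 j2 j3 : Fin 4)
    (hinj : Function.Injective C.lab)
    (hmf : ∀ j : Fin 4, C.mass (C.lab j) = gg (C.hi j) - gg (C.lo j))
    (h01 : C.hi j0 ≤ C.lo j1) (h12 : C.hi j1 ≤ C.lo j2) (h23 : C.hi j2 ≤ C.lo j3)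
    (hn0 : C.lo j0 < C.hi j0) (hn1 : C.lo j1 < C.hi j1) (hn2 : C.lo j2 < C.hi j2)
    (hn3 : C.lo j3 < C.hi j3)
    (ha : C.lo j0 < 0) (hb : 0 < C.hi j0) : False := by
  set a0 := C.lo j0; set b0 := C.hi j0
  set a1 := C.lo j1; set b1 := C.hi j1
  set a2 := C.lo j2; set b2 := C.hi j2
  set a3 := C.lo j3; set b3 := C.hi j3
  set l : ℝ := -gg a0 with hld
  set r : ℝ := gg b0 with hrd
  set μ1 : ℝ := gg b1 - gg a1 with hμ1
  set μ2 : ℝ := gg b2 - gg a2 with hμ2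
  set μ3 : ℝ := gg b3 - gg a3 with hμ3
  have hl : 0 < l := by
    have : gg a0 < gg 0 := gg_mono ha
    rw [gg_zero] at this; simp only [hld]; linarith
  have hr : 0 < r := by
    have : gg 0 < gg b0 := gg_mono hb
    rw [gg_zero] at this; simp only [hrd]; linarith
  have hp1 : 0 < μ1 := sub_pos.2 (gg_mono hn1)
  have hp2 : 0 < μ2 := sub_pos.2 (gg_mono hn2)
  have hp3 : 0 < μ3 := sub_pos.2 (gg_mono hn3)
  have hga1 : gg b0 ≤ gg a1 := gg_mono.monotone h01
  have hc12 : gg b1 ≤ gg a2 := gg_mono.monotone h12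
  have hc23 : gg b2 ≤ gg a3 := gg_mono.monotone h23
  have hb01 : b0 ≤ a1 := h01
  -- lower bounds
  have s0 : Real.sqrt (2*l) ≤ -a0 := by
    have := sqrt_le_abs_of_le_gg (X := l) (y := -a0) (le_of_eq (by rw [gg_neg]))
    rwa [abs_of_pos (by linarith)] at this
  have sr : Real.sqrt (2*r) ≤ b0 := by
    have := sqrt_le_abs_of_le_gg (X := r) (y := b0) (le_refl _)
    rwa [abs_of_pos hb] at this
  have s1 : Real.sqrt (2*(r+μ1)) ≤ b1 := by
    have := sqrt_le_abs_of_le_gg (X := r+μ1) (y := b1)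
      (by simp only [hrd, hμ1]; linarith)
    rwa [abs_of_pos (by linarith)] at this
  have s2 : Real.sqrt (2*(r+μ1+μ2)) ≤ b2 := by
    have := sqrt_le_abs_of_le_gg (X := r+μ1+μ2) (y := b2)
      (by simp only [hrd, hμ1, hμ2]; linarith)
    rwa [abs_of_pos (by linarith)] at this
  have s3 : Real.sqrt (2*(r+μ1+μ2+μ3)) ≤ b3 := by
    have := sqrt_le_abs_of_le_gg (X := r+μ1+μ2+μ3) (y := b3)
      (by simp only [hrd, hμ1, hμ2, hμ3]; linarith)
    rwa [abs_of_pos (by linarith)] at this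
  have hlow : -a0 + b0 + b1 + b2 + b3 ≤ C.perim := by
    have h := perim_ge5 C a0 b0 b1 b2 b3 (lo_mem_endpointSet C j0) (hi_mem_endpointSet C j0)
      (hi_mem_endpointSet C j1) (hi_mem_endpointSet C j2) (hi_mem_endpointSet C j3)
      hn0 (by linarith) (by linarith) (by linarith)
    rw [abs_of_neg ha, abs_of_pos hb, abs_of_pos (by linarith), abs_of_pos (by linarith),
      abs_of_pos (by linarith)] at h
    exact h
  have hne01 : j0 ≠ j1 := fun h => by have e : b0 = b1 := congrArg C.hi h; linarith
  have hne12 : j1 ≠ j2 := fun h => by have e : b1 = b2 := congrArg C.hi h; linarith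
  have hne23 : j2 ≠ j3 := fun h => by have e : b2 = b3 := congrArg C.hi h; linarith
  have hne02 : j0 ≠ j2 := fun h => by have e : b0 = b2 := congrArg C.hi h; linarith
  have hne03 : j0 ≠ j3 := fun h => by have e : b0 = b3 := congrArg C.hi h; linarith
  have hne13 : j1 ≠ j3 := fun h => by have e : b1 = b3 := congrArg C.hi h; linarith
  have hvinj : Function.Injective ![j0, j1, j2, j3] :=
    vec4_inj _ _ _ _ hne01 hne02 hne03 hne12 hne13 hne23
  have hlbinj : Function.Injective (C.lab ∘ ![j0, j1, j2, j3]) := hinj.comp hvinj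
  have hlbsurj := Finite.surjective_of_injective hlbinj
  -- competitor: straddler moved fully to the left
  have hupL := kernel hiso (-Real.sqrt (2*(l+r))) 0 (Real.sqrt (2*μ1))
    (Real.sqrt (2*(μ1+μ2))) (Real.sqrt (2*(μ1+μ2+μ3)))
    (neg_lt_zero.2 (Real.sqrt_pos.2 (by linarith)))
    (Real.sqrt_pos.2 (by linarith))
    (Real.sqrt_lt_sqrt (by positivity) (by linarith))
    (Real.sqrt_lt_sqrt (by positivity) (by linarith))
    (C.lab ∘ ![j0, j1, j2, j3]) hlbinj hlbsurj
    (by show C.mass (C.lab j0) = _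
        rw [hmf j0, gg_zero, gg_neg, gg_sqrt (by linarith : (0:ℝ) ≤ l+r)]
        simp only [hld, hrd]; ring)
    (by show C.mass (C.lab j1) = _
        rw [hmf j1, gg_zero, gg_sqrt (by linarith : (0:ℝ) ≤ μ1)]
        simp only [hμ1]; ring)
    (by show C.mass (C.lab j2) = _
        rw [hmf j2, gg_sqrt (by linarith : (0:ℝ) ≤ μ1),
          gg_sqrt (by linarith : (0:ℝ) ≤ μ1+μ2)]
        simp only [hμ2]; ring)
    (by show C.mass (C.lab j3) = _
        rw [hmf j3, gg_sqrt (by linarith : (0:ℝ) ≤ μ1+μ2),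
          gg_sqrt (by linarith : (0:ℝ) ≤ μ1+μ2+μ3)]
        simp only [hμ3]; ring)
  rw [abs_neg, abs_of_nonneg (Real.sqrt_nonneg _), abs_zero,
    abs_of_nonneg (Real.sqrt_nonneg _), abs_of_nonneg (Real.sqrt_nonneg _),
    abs_of_nonneg (Real.sqrt_nonneg _)] at hupL
  -- competitor: straddler moved fully to the right
  have hupR := kernel hiso 0 (Real.sqrt (2*(l+r))) (Real.sqrt (2*(l+r+μ1)))
    (Real.sqrt (2*(l+r+μ1+μ2))) (Real.sqrt (2*(l+r+μ1+μ2+μ3)))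
    (Real.sqrt_pos.2 (by linarith))
    (Real.sqrt_lt_sqrt (by positivity) (by linarith))
    (Real.sqrt_lt_sqrt (by positivity) (by linarith))
    (Real.sqrt_lt_sqrt (by positivity) (by linarith))
    (C.lab ∘ ![j0, j1, j2, j3]) hlbinj hlbsurj
    (by show C.mass (C.lab j0) = _
        rw [hmf j0, gg_zero, gg_sqrt (by linarith : (0:ℝ) ≤ l+r)]
        simp only [hld, hrd]; ring)
    (by show C.mass (C.lab j1) = _
        rw [hmf j1, gg_sqrt (by linarith : (0:ℝ) ≤ l+r),
          gg_sqrt (by linarith : (0:ℝ) ≤ l+r+μ1)]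
        simp only [hμ1]; ring)
    (by show C.mass (C.lab j2) = _
        rw [hmf j2, gg_sqrt (by linarith : (0:ℝ) ≤ l+r+μ1),
          gg_sqrt (by linarith : (0:ℝ) ≤ l+r+μ1+μ2)]
        simp only [hμ2]; ring)
    (by show C.mass (C.lab j3) = _
        rw [hmf j3, gg_sqrt (by linarith : (0:ℝ) ≤ l+r+μ1+μ2),
          gg_sqrt (by linarith : (0:ℝ) ≤ l+r+μ1+μ2+μ3)]
        simp only [hμ3]; ring)
  rw [abs_zero, abs_of_nonneg (Real.sqrt_nonneg _), abs_of_nonneg (Real.sqrt_nonneg _),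
    abs_of_nonneg (Real.sqrt_nonneg _), abs_of_nonneg (Real.sqrt_nonneg _)] at hupR
  -- concavity inequalities
  have c1 := conc_strict0 hl hr
  have c2 := conc_strict0 hr hl
  rw [show (2*(r+l) : ℝ) = 2*(l+r) by ring, show (r+l : ℝ) = l+r by ring] at c2
  have c3 := conc_strict (by linarith : (0:ℝ) ≤ μ1) hr hl
  rw [show (2*(r+l+μ1) : ℝ) = 2*(l+r+μ1) by ring, show (r+l : ℝ) = l+r by ring] at c3
  have c4 := conc_strict (by linarith : (0:ℝ) ≤ μ1+μ2) hr hl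
  rw [show (2*(r+l+(μ1+μ2)) : ℝ) = 2*(l+r+μ1+μ2) by ring,
    show (r+l : ℝ) = l+r by ring, show (r+(μ1+μ2) : ℝ) = r+μ1+μ2 by ring] at c4
  have c5 := conc_strict (by linarith : (0:ℝ) ≤ μ1+μ2+μ3) hr hl
  rw [show (2*(r+l+(μ1+μ2+μ3)) : ℝ) = 2*(l+r+μ1+μ2+μ3) by ring,
    show (r+l : ℝ) = l+r by ring, show (r+(μ1+μ2+μ3) : ℝ) = r+μ1+μ2+μ3 by ring] at c5
  -- combine
  have hL : Real.sqrt (2*l) + Real.sqrt (2*r) + Real.sqrt (2*(r+μ1)) +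
      Real.sqrt (2*(r+μ1+μ2)) + Real.sqrt (2*(r+μ1+μ2+μ3)) ≤ C.perim := by linarith
  have e1 := mul_le_mul_of_nonneg_left hupL hl.le
  have e2 := mul_le_mul_of_nonneg_left hupR hr.le
  have e3 := mul_le_mul_of_nonneg_left hL (by positivity : (0:ℝ) ≤ l+r)
  linarith [e1, e2, e3, c1, c2, c3, c4, c5]

lemma case_str1 (C : Config 4 4) (hiso : C.Isoperimetric) (j0 j1 j2 j3 : Fin 4)
    (hinj : Function.Injective C.lab)
    (hmf : ∀ j : Fin 4, C.mass (C.lab j) = gg (C.hi j) - gg (C.lo j))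
    (h01 : C.hi j0 ≤ C.lo j1) (h12 : C.hi j1 ≤ C.lo j2) (h23 : C.hi j2 ≤ C.lo j3)
    (hn0 : C.lo j0 < C.hi j0) (hn1 : C.lo j1 < C.hi j1) (hn2 : C.lo j2 < C.hi j2)
    (hn3 : C.lo j3 < C.hi j3)
    (ha : C.lo j1 < 0) (hb : 0 < C.hi j1) : False := by
  set a0 := C.lo j0; set b0 := C.hi j0
  set a1 := C.lo j1; set b1 := C.hi j1
  set a2 := C.lo j2; set b2 := C.hi j2
  set a3 := C.lo j3; set b3 := C.hi j3
  set l : ℝ := -gg a1 with hld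
  set r : ℝ := gg b1 with hrd
  set μ0 : ℝ := gg b0 - gg a0 with hμ0
  set μ2 : ℝ := gg b2 - gg a2 with hμ2
  set μ3 : ℝ := gg b3 - gg a3 with hμ3
  have hl : 0 < l := by
    have : gg a1 < gg 0 := gg_mono ha
    rw [gg_zero] at this; simp only [hld]; linarith
  have hr : 0 < r := by
    have : gg 0 < gg b1 := gg_mono hb
    rw [gg_zero] at this; simp only [hrd]; linarith
  have hp0 : 0 < μ0 := sub_pos.2 (gg_mono hn0)
  have hp2 : 0 < μ2 := sub_pos.2 (gg_mono hn2)
  have hp3 : 0 < μ3 := sub_pos.2 (gg_mono hn3)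
  have hc01 : gg b0 ≤ gg a1 := gg_mono.monotone h01
  have hc12 : gg b1 ≤ gg a2 := gg_mono.monotone h12
  have hc23 : gg b2 ≤ gg a3 := gg_mono.monotone h23
  -- lower bounds
  have s1l : Real.sqrt (2*l) ≤ -a1 := by
    have := sqrt_le_abs_of_le_gg (X := l) (y := -a1) (le_of_eq (by rw [gg_neg]))
    rwa [abs_of_pos (by linarith)] at this
  have s0l : Real.sqrt (2*(l+μ0)) ≤ -a0 := by
    have := sqrt_le_abs_of_le_gg (X := l+μ0) (y := -a0)
      (by rw [gg_neg]; simp only [hld, hμ0]; linarith)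
    rwa [abs_of_pos (by linarith)] at this
  have sr : Real.sqrt (2*r) ≤ b1 := by
    have := sqrt_le_abs_of_le_gg (X := r) (y := b1) (le_refl _)
    rwa [abs_of_pos hb] at this
  have s2 : Real.sqrt (2*(r+μ2)) ≤ b2 := by
    have := sqrt_le_abs_of_le_gg (X := r+μ2) (y := b2)
      (by simp only [hrd, hμ2]; linarith)
    rwa [abs_of_pos (by linarith)] at this
  have s3 : Real.sqrt (2*(r+μ2+μ3)) ≤ b3 := by
    have := sqrt_le_abs_of_le_gg (X := r+μ2+μ3) (y := b3)
      (by simp only [hrd, hμ2, hμ3]; linarith)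
    rwa [abs_of_pos (by linarith)] at this
  have hlow : -a0 + -a1 + b1 + b2 + b3 ≤ C.perim := by
    have h := perim_ge5 C a0 a1 b1 b2 b3 (lo_mem_endpointSet C j0) (lo_mem_endpointSet C j1)
      (hi_mem_endpointSet C j1) (hi_mem_endpointSet C j2) (hi_mem_endpointSet C j3)
      (by linarith) hn1 (by linarith) (by linarith)
    rw [abs_of_neg (by linarith : a0 < 0), abs_of_neg ha, abs_of_pos hb,
      abs_of_pos (by linarith), abs_of_pos (by linarith)] at h
    linarith
  have hne01 : j0 ≠ j1 := fun h => by have e : b0 = b1 := congrArg C.hi h; linarith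
  have hne12 : j1 ≠ j2 := fun h => by have e : b1 = b2 := congrArg C.hi h; linarith
  have hne23 : j2 ≠ j3 := fun h => by have e : b2 = b3 := congrArg C.hi h; linarith
  have hne02 : j0 ≠ j2 := fun h => by have e : b0 = b2 := congrArg C.hi h; linarith
  have hne03 : j0 ≠ j3 := fun h => by have e : b0 = b3 := congrArg C.hi h; linarith
  have hne13 : j1 ≠ j3 := fun h => by have e : b1 = b3 := congrArg C.hi h; linarith
  have hvinj : Function.Injective ![j0, j1, j2, j3] :=
    vec4_inj _ _ _ _ hne01 hne02 hne03 hne12 hne13 hne23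
  have hlbinj : Function.Injective (C.lab ∘ ![j0, j1, j2, j3]) := hinj.comp hvinj
  have hlbsurj := Finite.surjective_of_injective hlbinj
  have hupL := kernel hiso (-Real.sqrt (2*(l+r+μ0))) (-Real.sqrt (2*(l+r))) 0
    (Real.sqrt (2*μ2)) (Real.sqrt (2*(μ2+μ3)))
    (neg_lt_neg (Real.sqrt_lt_sqrt (by positivity) (by linarith)))
    (neg_lt_zero.2 (Real.sqrt_pos.2 (by linarith)))
    (Real.sqrt_pos.2 (by linarith))
    (Real.sqrt_lt_sqrt (by positivity) (by linarith))
    (C.lab ∘ ![j0, j1, j2, j3]) hlbinj hlbsurj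
    (by show C.mass (C.lab j0) = _
        rw [hmf j0, gg_neg, gg_neg, gg_sqrt (by linarith : (0:ℝ) ≤ l+r),
          gg_sqrt (by linarith : (0:ℝ) ≤ l+r+μ0)]
        simp only [hμ0]; ring)
    (by show C.mass (C.lab j1) = _
        rw [hmf j1, gg_zero, gg_neg, gg_sqrt (by linarith : (0:ℝ) ≤ l+r)]
        simp only [hld, hrd]; ring)
    (by show C.mass (C.lab j2) = _
        rw [hmf j2, gg_zero, gg_sqrt (by linarith : (0:ℝ) ≤ μ2)]
        simp only [hμ2]; ring)
    (by show C.mass (C.lab j3) = _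
        rw [hmf j3, gg_sqrt (by linarith : (0:ℝ) ≤ μ2),
          gg_sqrt (by linarith : (0:ℝ) ≤ μ2+μ3)]
        simp only [hμ3]; ring)
  rw [abs_neg, abs_of_nonneg (Real.sqrt_nonneg _), abs_neg,
    abs_of_nonneg (Real.sqrt_nonneg _), abs_zero,
    abs_of_nonneg (Real.sqrt_nonneg _), abs_of_nonneg (Real.sqrt_nonneg _)] at hupL
  have hupR := kernel hiso (-Real.sqrt (2*μ0)) 0 (Real.sqrt (2*(l+r)))
    (Real.sqrt (2*(l+r+μ2))) (Real.sqrt (2*(l+r+μ2+μ3)))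
    (neg_lt_zero.2 (Real.sqrt_pos.2 (by linarith)))
    (Real.sqrt_pos.2 (by linarith))
    (Real.sqrt_lt_sqrt (by positivity) (by linarith))
    (Real.sqrt_lt_sqrt (by positivity) (by linarith))
    (C.lab ∘ ![j0, j1, j2, j3]) hlbinj hlbsurj
    (by show C.mass (C.lab j0) = _
        rw [hmf j0, gg_zero, gg_neg, gg_sqrt (by linarith : (0:ℝ) ≤ μ0)]
        simp only [hμ0]; ring)
    (by show C.mass (C.lab j1) = _
        rw [hmf j1, gg_zero, gg_sqrt (by linarith : (0:ℝ) ≤ l+r)]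
        simp only [hld, hrd]; ring)
    (by show C.mass (C.lab j2) = _
        rw [hmf j2, gg_sqrt (by linarith : (0:ℝ) ≤ l+r),
          gg_sqrt (by linarith : (0:ℝ) ≤ l+r+μ2)]
        simp only [hμ2]; ring)
    (by show C.mass (C.lab j3) = _
        rw [hmf j3, gg_sqrt (by linarith : (0:ℝ) ≤ l+r+μ2),
          gg_sqrt (by linarith : (0:ℝ) ≤ l+r+μ2+μ3)]
        simp only [hμ3]; ring)
  rw [abs_neg, abs_of_nonneg (Real.sqrt_nonneg _), abs_zero,
    abs_of_nonneg (Real.sqrt_nonneg _), abs_of_nonneg (Real.sqrt_nonneg _),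
    abs_of_nonneg (Real.sqrt_nonneg _)] at hupR
  have c1 := conc_strict0 hl hr
  have c2 := conc_strict (by linarith : (0:ℝ) ≤ μ0) hl hr
  rw [show (l+r+μ0 : ℝ) = l+r+μ0 by ring] at c2
  have c3 := conc_strict0 hr hl
  rw [show (2*(r+l) : ℝ) = 2*(l+r) by ring, show (r+l : ℝ) = l+r by ring] at c3
  have c4 := conc_strict (by linarith : (0:ℝ) ≤ μ2) hr hl
  rw [show (2*(r+l+μ2) : ℝ) = 2*(l+r+μ2) by ring, show (r+l : ℝ) = l+r by ring] at c4
  have c5 := conc_strict (by linarith : (0:ℝ) ≤ μ2+μ3) hr hl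
  rw [show (2*(r+l+(μ2+μ3)) : ℝ) = 2*(l+r+μ2+μ3) by ring,
    show (r+l : ℝ) = l+r by ring, show (r+(μ2+μ3) : ℝ) = r+μ2+μ3 by ring] at c5
  have hL : Real.sqrt (2*(l+μ0)) + Real.sqrt (2*l) + Real.sqrt (2*r) +
      Real.sqrt (2*(r+μ2)) + Real.sqrt (2*(r+μ2+μ3)) ≤ C.perim := by linarith
  have e1 := mul_le_mul_of_nonneg_left hupL hl.le
  have e2 := mul_le_mul_of_nonneg_left hupR hr.le
  have e3 := mul_le_mul_of_nonneg_left hL (by positivity : (0:ℝ) ≤ l+r)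
  linarith [e1, e2, e3, c1, c2, c3, c4, c5]

noncomputable def Config.reflect {n k : ℕ} (C : Config n k) : Config n k where
  lo j := -C.hi j
  hi j := -C.lo j
  lab := C.lab
  nondeg j := by have := C.nondeg j; show -C.hi j < -C.lo j; linarith
  disj i j hij := by
    have h := C.disj i j hij
    ext x
    simp only [Set.mem_inter_iff, Set.mem_Ioo, Set.mem_empty_iff_false, iff_false]
    rintro ⟨⟨h1, h2⟩, h3, h4⟩
    have hx : -x ∈ Set.Ioo (C.lo i) (C.hi i) ∩ Set.Ioo (C.lo j) (C.hi j) :=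
      ⟨⟨by linarith, by linarith⟩, by linarith, by linarith⟩
    rw [h] at hx
    exact hx

lemma reflect_lo {n k : ℕ} (C : Config n k) (j : Fin k) : C.reflect.lo j = -C.hi j := rfl
lemma reflect_hi {n k : ℕ} (C : Config n k) (j : Fin k) : C.reflect.hi j = -C.lo j := rfl
lemma reflect_lab {n k : ℕ} (C : Config n k) : C.reflect.lab = C.lab := rfl

lemma reflect_mass {n k : ℕ} (C : Config n k) (i : Fin n) : C.reflect.mass i = C.mass i := by
  unfold Config.mass
  apply Finset.sum_congr rfl
  intro j _
  rw [reflect_lo, reflect_hi, integral_abs, integral_abs, gg_neg, gg_neg]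
  ring

lemma reflect_perim {n k : ℕ} (C : Config n k) : C.reflect.perim = C.perim := by
  unfold Config.perim
  have hE : C.reflect.endpointSet = C.endpointSet.image (fun x => -x) := by
    unfold Config.endpointSet
    rw [Finset.image_union]
    ext z
    simp only [Finset.mem_union, Finset.mem_image, Finset.mem_univ, true_and]
    constructor
    · rintro (⟨j, rfl⟩ | ⟨j, rfl⟩)
      · exact Or.inr ⟨C.hi j, ⟨j, rfl⟩, rfl⟩
      · exact Or.inl ⟨C.lo j, ⟨j, rfl⟩, rfl⟩
    · rintro (⟨y, ⟨j, rfl⟩, rfl⟩ | ⟨y, ⟨j, rfl⟩, rfl⟩)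
      · exact Or.inr ⟨j, rfl⟩
      · exact Or.inl ⟨j, rfl⟩
  rw [hE, Finset.sum_image (fun a _ b _ h => by linarith : ∀ a ∈ C.endpointSet, ∀ b ∈ C.endpointSet, -a = -b → a = b)]
  simp

lemma reflect_iso {n k : ℕ} (C : Config n k) (hiso : C.Isoperimetric) :
    C.reflect.Isoperimetric := by
  intro k' C' hm
  rw [reflect_perim]
  exact hiso k' C' (fun i => by rw [hm i, reflect_mass])

/-- 4-Bubble Lemma: if a configuration of `4` regions on `ℝ` with density `|x|` is
isoperimetric and each of its regions consists of a single interval, then no interval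
contains `0` in its interior, exactly two of the four intervals are contained in
`(-∞,0]`, and exactly two are contained in `[0,∞)`. -/
theorem four_bubble_lemma (k : ℕ) (C : Config 4 k) (hiso : C.Isoperimetric)
    (hsingle : ∀ i : Fin 4, (univ.filter (fun j => C.lab j = i)).card = 1) :
    (∀ j, ¬ (C.lo j < 0 ∧ 0 < C.hi j)) ∧
    (univ.filter (fun j : Fin k => C.hi j ≤ 0)).card = 2 ∧
    (univ.filter (fun j : Fin k => 0 ≤ C.lo j)).card = 2 := by
  have hk : k = 4 := by
    have h1 : (univ : Finset (Fin k)).card =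
        ∑ i ∈ (univ : Finset (Fin 4)), (univ.filter (fun j => C.lab j = i)).card :=
      Finset.card_eq_sum_card_fiberwise (fun x _ => Finset.mem_univ _)
    simp only [hsingle] at h1
    simpa using h1
  subst hk
  have hlabinj : Function.Injective C.lab := by
    intro x y hxy
    have hx : x ∈ univ.filter (fun j => C.lab j = C.lab y) := by simp [hxy]
    have hy : y ∈ univ.filter (fun j => C.lab j = C.lab y) := by simp
    obtain ⟨z, hz⟩ := Finset.card_eq_one.1 (hsingle (C.lab y))
    rw [hz] at hx hy
    simp only [Finset.mem_singleton] at hx hy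
    rw [hx, hy]
  have hmf : ∀ j : Fin 4, C.mass (C.lab j) = gg (C.hi j) - gg (C.lo j) := by
    intro j
    have hfil : univ.filter (fun j' => C.lab j' = C.lab j) = {j} := by
      ext j'
      simp only [Finset.mem_filter, Finset.mem_univ, true_and, Finset.mem_singleton]
      exact ⟨fun h => hlabinj h, fun h => by rw [h]⟩
    rw [Config.mass, hfil, Finset.sum_singleton, integral_abs]
  -- reflected data
  have hinjR : Function.Injective C.reflect.lab := hlabinj
  have hmfR : ∀ j : Fin 4, C.reflect.mass (C.reflect.lab j) =
      gg (C.reflect.hi j) - gg (C.reflect.lo j) := by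
    intro j
    rw [reflect_lab, reflect_mass, hmf, reflect_hi, reflect_lo, gg_neg, gg_neg]
    ring
  have hisoR := reflect_iso C hiso
  -- sorting
  set σ := Tuple.sort C.lo with hσ
  have hmono : Monotone (C.lo ∘ σ) := Tuple.monotone_sort C.lo
  have hsep : ∀ t t' : Fin 4, t < t' → C.hi (σ t) ≤ C.lo (σ t') := by
    intro t t' htt
    exact sep (C.disj (σ t) (σ t') (fun h => absurd (σ.injective h) (ne_of_lt htt)))
      (C.nondeg _) (C.nondeg _) (hmono (le_of_lt htt))
  set j0 := σ 0 with hj0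
  set j1 := σ 1 with hj1
  set j2 := σ 2 with hj2
  set j3 := σ 3 with hj3
  have h01 : C.hi j0 ≤ C.lo j1 := hsep 0 1 (by decide)
  have h12 : C.hi j1 ≤ C.lo j2 := hsep 1 2 (by decide)
  have h23 : C.hi j2 ≤ C.lo j3 := hsep 2 3 (by decide)
  have hn0 := C.nondeg j0
  have hn1 := C.nondeg j1
  have hn2 := C.nondeg j2
  have hn3 := C.nondeg j3
  have hne01 : j0 ≠ j1 := fun h => absurd (σ.injective h) (by decide)
  have hne02 : j0 ≠ j2 := fun h => absurd (σ.injective h) (by decide)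
  have hne03 : j0 ≠ j3 := fun h => absurd (σ.injective h) (by decide)
  have hne12 : j1 ≠ j2 := fun h => absurd (σ.injective h) (by decide)
  have hne13 : j1 ≠ j3 := fun h => absurd (σ.injective h) (by decide)
  have hne23 : j2 ≠ j3 := fun h => absurd (σ.injective h) (by decide)
  have huniv : ({j0, j1, j2, j3} : Finset (Fin 4)) = univ := by
    apply Finset.eq_univ_of_card
    rw [Finset.card_insert_of_notMem (by simp [hne01, hne02, hne03]),
      Finset.card_insert_of_notMem (by simp [hne12, hne13]),
      Finset.card_insert_of_notMem (by simp [hne23]), Finset.card_singleton]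
    simp
  -- reflected order facts
  have h01R : C.reflect.hi j3 ≤ C.reflect.lo j2 := by
    rw [reflect_hi, reflect_lo]; linarith
  have h12R : C.reflect.hi j2 ≤ C.reflect.lo j1 := by
    rw [reflect_hi, reflect_lo]; linarith
  have h23R : C.reflect.hi j1 ≤ C.reflect.lo j0 := by
    rw [reflect_hi, reflect_lo]; linarith
  have hn0R := C.reflect.nondeg j3
  have hn1R := C.reflect.nondeg j2
  have hn2R := C.reflect.nondeg j1
  have hn3R := C.reflect.nondeg j0
  -- no straddler
  have hns : ∀ j : Fin 4, ¬ (C.lo j < 0 ∧ 0 < C.hi j) := by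
    rintro j ⟨hlo, hhi⟩
    have hjm : j ∈ ({j0, j1, j2, j3} : Finset (Fin 4)) := by
      rw [huniv]; exact Finset.mem_univ j
    simp only [Finset.mem_insert, Finset.mem_singleton] at hjm
    rcases hjm with rfl | rfl | rfl | rfl
    · exact case_str0 C hiso j0 j1 j2 j3 hlabinj hmf h01 h12 h23 hn0 hn1 hn2 hn3 hlo hhi
    · exact case_str1 C hiso j0 j1 j2 j3 hlabinj hmf h01 h12 h23 hn0 hn1 hn2 hn3 hlo hhi
    · exact case_str1 C.reflect hisoR j3 j2 j1 j0 hinjR hmfR h01R h12R h23R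
        hn0R hn1R hn2R hn3R (by rw [reflect_lo]; linarith) (by rw [reflect_hi]; linarith)
    · exact case_str0 C.reflect hisoR j3 j2 j1 j0 hinjR hmfR h01R h12R h23R
        hn0R hn1R hn2R hn3R (by rw [reflect_lo]; linarith) (by rw [reflect_hi]; linarith)
  have hsplit : ∀ j : Fin 4, C.hi j ≤ 0 ∨ 0 ≤ C.lo j := by
    intro j
    rcases le_or_gt (C.hi j) 0 with h | h
    · exact Or.inl h
    · right
      by_contra hc
      push_neg at hc
      exact hns j ⟨hc, h⟩
  have hgood : C.hi j1 ≤ 0 ∧ 0 ≤ C.lo j2 := by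
    rcases le_or_gt (C.hi j1) 0 with hB1 | hB1
    · rcases hsplit j2 with hB2 | hB2
      · exfalso
        rcases hsplit j3 with hB3 | hB3
        · exact case_c0 C.reflect hisoR j3 j2 j1 j0 hinjR hmfR h01R h12R h23R
            hn0R hn1R hn2R hn3R (by rw [reflect_lo]; linarith)
        · exact case_c1 C.reflect hisoR j3 j2 j1 j0 hinjR hmfR h01R h12R h23R
            hn0R hn1R hn2R hn3R (by rw [reflect_hi]; linarith) (by rw [reflect_lo]; linarith)
      · exact ⟨hB1, hB2⟩
    · exfalso
      have hA1 : 0 ≤ C.lo j1 := (hsplit j1).resolve_left (not_le.2 hB1)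
      rcases hsplit j0 with hB0 | hB0
      · exact case_c1 C hiso j0 j1 j2 j3 hlabinj hmf h01 h12 h23 hn0 hn1 hn2 hn3 hB0 hA1
      · exact case_c0 C hiso j0 j1 j2 j3 hlabinj hmf h01 h12 h23 hn0 hn1 hn2 hn3 hB0
  obtain ⟨hB1, hA2⟩ := hgood
  have hb0 : C.hi j0 ≤ 0 := by linarith
  have hlo3 : 0 ≤ C.lo j3 := by linarith
  have hhi2 : 0 < C.hi j2 := by linarith
  have hhi3 : 0 < C.hi j3 := by linarith
  have hlo0 : C.lo j0 < 0 := by linarith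
  have hlo1 : C.lo j1 < 0 := by linarith
  refine ⟨hns, ?_, ?_⟩
  · have hfil : univ.filter (fun j : Fin 4 => C.hi j ≤ 0) = {j0, j1} := by
      ext j
      simp only [Finset.mem_filter, Finset.mem_univ, true_and, Finset.mem_insert,
        Finset.mem_singleton]
      constructor
      · intro hj
        have hjm : j ∈ ({j0, j1, j2, j3} : Finset (Fin 4)) := by
          rw [huniv]; exact Finset.mem_univ j
        simp only [Finset.mem_insert, Finset.mem_singleton] at hjm
        rcases hjm with rfl | rfl | rfl | rfl
        · exact Or.inl rfl
        · exact Or.inr rfl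
        · exact absurd hj (not_le.2 hhi2)
        · exact absurd hj (not_le.2 hhi3)
      · rintro (rfl | rfl)
        · exact hb0
        · exact hB1
    rw [hfil, Finset.card_insert_of_notMem (by simp [hne01]), Finset.card_singleton]
  · have hfil : univ.filter (fun j : Fin 4 => 0 ≤ C.lo j) = {j2, j3} := by
      ext j
      simp only [Finset.mem_filter, Finset.mem_univ, true_and, Finset.mem_insert,
        Finset.mem_singleton]
      constructor
      · intro hj
        have hjm : j ∈ ({j0, j1, j2, j3} : Finset (Fin 4)) := by
          rw [huniv]; exact Finset.mem_univ j
        simp only [Finset.mem_insert, Finset.mem_singleton] at hjm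
        rcases hjm with rfl | rfl | rfl | rfl
        · exact absurd hj (not_le.2 hlo0)
        · exact absurd hj (not_le.2 hlo1)
        · exact Or.inl rfl
        · exact Or.inr rfl
      · rintro (rfl | rfl)
        · exact hA2
        · exact hlo3
    rw [hfil, Finset.card_insert_of_notMem (by simp [hne23]), Finset.card_singleton]
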